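/- arXiv:1706.08559 — 7 statements merged into one kernel-verified Lean document; each statement's English description precedes it below -/
import Mathlib

section
/- Let f and g be pseudomonomials in F_2[x_1,...,x_n], where a pseudomonomial is a product ∏_{i∈σ} x_i · ∏_{j∈τ} (1−x_j) with σ, τ ⊆ [n] disjoint. Then f divides g in F_2[x_1,...,x_n] if and only if the polarization P(f) divides P(g) in F_2[x_1,...,x_n,y_1,...,y_n], where the polarization of ∏_{i∈σ} x_i ∏_{j∈τ}(1−x_j) is the squarefree monomial ∏_{i∈σ} x_i ∏_{j∈τ} y_j. -/
open MvPolynomial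

/-- The pseudomonomial with data `(σ, τ)`: `∏_{i∈σ} x_i · ∏_{j∈τ} (1 - x_j)`. -/
noncomputable def psm {n : ℕ} (σ τ : Finset (Fin n)) :
    MvPolynomial (Fin n) (ZMod 2) :=
  (∏ i ∈ σ, X i) * ∏ j ∈ τ, (1 - X j)

/-- The polarization of the pseudomonomial with data `(σ, τ)`:
the squarefree monomial `∏_{i∈σ} x_i · ∏_{j∈τ} y_j` in
`S = F₂[x_1,…,x_n,y_1,…,y_n]`, where `x_i = X (Sum.inl i)` and `y_j = X (Sum.inr j)`. -/
noncomputable def polz {n : ℕ} (σ τ : Finset (Fin n)) :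
    MvPolynomial (Fin n ⊕ Fin n) (ZMod 2) :=
  (∏ i ∈ σ, X (Sum.inl i)) * ∏ j ∈ τ, X (Sum.inr j)

lemma eval_psm {n : ℕ} (σ τ : Finset (Fin n)) (v : Fin n → ZMod 2) :
    eval v (psm σ τ) = (∏ i ∈ σ, v i) * ∏ j ∈ τ, (1 - v j) := by
  simp [psm]

lemma eval_polz {n : ℕ} (σ τ : Finset (Fin n)) (v : Fin n ⊕ Fin n → ZMod 2) :
    eval v (polz σ τ) = (∏ i ∈ σ, v (Sum.inl i)) * ∏ j ∈ τ, v (Sum.inr j) := by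
  simp [polz]

lemma subset_of_psm_dvd {n : ℕ} {σf τf σg τg : Finset (Fin n)} (hg : Disjoint σg τg)
    (h : psm σf τf ∣ psm σg τg) : σf ⊆ σg ∧ τf ⊆ τg := by
  obtain ⟨q, hq⟩ := h
  constructor
  · intro i hi
    by_contra hns
    have := congrArg (eval (fun k => if k ∈ σg then 1 else 0)) hq
    rw [map_mul, eval_psm, eval_psm] at this
    rw [Finset.prod_eq_zero hi (by simp [hns]),
      Finset.prod_eq_one (fun k hk => by simp [hk]),
      Finset.prod_eq_one (fun k hk => by simp [Finset.disjoint_right.mp hg hk])] at this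
    simp at this
  · intro j hj
    by_contra hns
    have := congrArg (eval (fun k => if k ∈ σg ∨ k = j then 1 else 0)) hq
    rw [map_mul, eval_psm, eval_psm] at this
    rw [Finset.prod_eq_zero hj (by simp),
      Finset.prod_eq_one (fun k hk => by simp [hk]),
      Finset.prod_eq_one (fun k hk => by
        have h1 : k ∉ σg := Finset.disjoint_right.mp hg hk
        have h2 : k ≠ j := fun e => hns (e ▸ hk)
        simp [h1, h2])] at this
    simp at this

lemma subset_of_polz_dvd {n : ℕ} {σf τf σg τg : Finset (Fin n)}
    (h : polz σf τf ∣ polz σg τg) : σf ⊆ σg ∧ τf ⊆ τg := by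
  obtain ⟨q, hq⟩ := h
  constructor
  · intro i hi
    by_contra hns
    have := congrArg (eval (fun k => if k = Sum.inl i then 0 else 1)) hq
    rw [map_mul, eval_polz, eval_polz] at this
    rw [Finset.prod_eq_zero hi (by simp),
      Finset.prod_eq_one (fun k hk => by
        simp [show Sum.inl k ≠ Sum.inl i from fun e => hns (Sum.inl.inj e ▸ hk)]),
      Finset.prod_eq_one (fun k hk => by simp)] at this
    simp at this
  · intro j hj
    by_contra hns
    have := congrArg (eval (fun k => if k = Sum.inr j then 0 else 1)) hq
    rw [map_mul, eval_polz, eval_polz] at this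
    rw [Finset.prod_eq_zero hj (by simp),
      Finset.prod_eq_one (fun k hk => by simp),
      Finset.prod_eq_one (fun k hk => by
        simp [show Sum.inr k ≠ Sum.inr j from fun e => hns (Sum.inr.inj e ▸ hk)])] at this
    simp at this

lemma psm_dvd_of_subset {n : ℕ} {σf τf σg τg : Finset (Fin n)}
    (h1 : σf ⊆ σg) (h2 : τf ⊆ τg) : psm σf τf ∣ psm σg τg := by
  refine ⟨psm (σg \ σf) (τg \ τf), ?_⟩
  unfold psm
  rw [← Finset.prod_sdiff h1, ← Finset.prod_sdiff h2]
  ring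

lemma polz_dvd_of_subset {n : ℕ} {σf τf σg τg : Finset (Fin n)}
    (h1 : σf ⊆ σg) (h2 : τf ⊆ τg) : polz σf τf ∣ polz σg τg := by
  refine ⟨polz (σg \ σf) (τg \ τf), ?_⟩
  unfold polz
  rw [← Finset.prod_sdiff h1, ← Finset.prod_sdiff h2]
  ring

theorem polarization_preserves_divisibility {n : ℕ}
    (σf τf σg τg : Finset (Fin n)) (hf : Disjoint σf τf) (hg : Disjoint σg τg) :
    psm σf τf ∣ psm σg τg ↔ polz σf τf ∣ polz σg τg := by
  constructor
  · intro h
    obtain ⟨h1, h2⟩ := subset_of_psm_dvd hg h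
    exact polz_dvd_of_subset h1 h2
  · intro h
    obtain ⟨h1, h2⟩ := subset_of_polz_dvd h
    exact psm_dvd_of_subset h1 h2
end

section
/- Let I = ⟨f_1,...,f_ℓ⟩ be a pseudomonomial ideal in canonical form in R = F_2[x_1,...,x_n]. Then ⟨P(f_1),...,P(f_ℓ)⟩ equals the ideal of S = F_2[x_1,...,x_n,y_1,...,y_n] generated by {P(f) : f a pseudomonomial in I}; in particular it is the smallest ideal J of S such that for every pseudomonomial f ∈ R, f ∈ I implies P(f) ∈ J. -/
open MvPolynomial

/-- A pseudomonomial: a product `∏_{i∈σ} x_i ∏_{j∈τ}(1 - x_j)` with `σ, τ` disjoint. -/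
def IsPseudomonomial {n : ℕ} (f : MvPolynomial (Fin n) (ZMod 2)) : Prop :=
  ∃ σ τ : Finset (Fin n), Disjoint σ τ ∧ f = psm σ τ

/-- `f` is a minimal pseudomonomial of `I`: `f` is a pseudomonomial lying in `I`
and no proper divisor of `f` lies in `I`. -/
def IsMinimalPseudomonomial {n : ℕ} (I : Ideal (MvPolynomial (Fin n) (ZMod 2)))
    (f : MvPolynomial (Fin n) (ZMod 2)) : Prop :=
  IsPseudomonomial f ∧ f ∈ I ∧
    ∀ g : MvPolynomial (Fin n) (ZMod 2), g ∣ f → ¬ f ∣ g → g ∉ I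



section Primes
variable {n : ℕ}

/-- Substitution of `C c` for `X i`. -/
noncomputable def substC (i : Fin n) (c : ZMod 2) :
    MvPolynomial (Fin n) (ZMod 2) →ₐ[ZMod 2] MvPolynomial (Fin n) (ZMod 2) :=
  aeval (Function.update X i (C c))

lemma dvd_sub_substC (i : Fin n) (c : ZMod 2) (a : MvPolynomial (Fin n) (ZMod 2)) :
    (X i - C c) ∣ (a - substC i c a) := by
  induction a using MvPolynomial.induction_on with
  | C r => simp [substC]
  | add p q hp hq =>
      have h := dvd_add hp hq
      have e : p + q - substC i c (p + q) = (p - substC i c p) + (q - substC i c q) := by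
        rw [map_add]; ring
      rw [e]; exact h
  | mul_X p j hp =>
      rcases eq_or_ne j i with rfl | hne
      · have e : p * X j - substC j c (p * X j)
            = p * (X j - C c) + C c * (p - substC j c p) := by
          rw [map_mul, show substC j c (X j) = C c by
            simp [substC, Function.update_self]]
          ring
        rw [e]
        exact dvd_add (Dvd.intro_left _ rfl) (hp.mul_left _)
      · have e : p * X j - substC i c (p * X j) = (p - substC i c p) * X j := by
          rw [map_mul, show substC i c (X j) = X j by
            simp [substC, Function.update_of_ne hne]]
          ring
        rw [e]; exact hp.mul_right _

lemma substC_self (i : Fin n) (c : ZMod 2) : substC i c (X i - C c) = 0 := by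
  simp [substC, Function.update_self]

lemma substC_eq_zero_iff (i : Fin n) (c : ZMod 2) (a : MvPolynomial (Fin n) (ZMod 2)) :
    substC i c a = 0 ↔ (X i - C c) ∣ a := by
  constructor
  · intro h
    have := dvd_sub_substC i c a
    rwa [h, sub_zero] at this
  · rintro ⟨q, rfl⟩
    rw [map_mul, substC_self, zero_mul]

lemma prime_X_sub_C' (i : Fin n) (c : ZMod 2) :
    Prime (X i - C c : MvPolynomial (Fin n) (ZMod 2)) := by
  refine ⟨?_, ?_, ?_⟩
  · intro h
    rw [sub_eq_zero] at h
    have h2 := congrArg (coeff (Finsupp.single i 1)) h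
    simp [coeff_X, coeff_C, eq_comm, Finsupp.single_eq_zero] at h2
  · intro h
    have := h.map (substC i c)
    rw [substC_self] at this
    exact not_isUnit_zero this
  · intro a b hab
    rw [← substC_eq_zero_iff, map_mul, mul_eq_zero] at hab
    exact hab.imp (substC_eq_zero_iff i c a).1 (substC_eq_zero_iff i c b).1

lemma prime_X' (i : Fin n) : Prime (X i : MvPolynomial (Fin n) (ZMod 2)) := by
  have := prime_X_sub_C' i 0
  simpa using this

lemma prime_one_sub_X (i : Fin n) : Prime (1 - X i : MvPolynomial (Fin n) (ZMod 2)) := by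
  have h := (prime_X_sub_C' i 1).neg
  have e : -(X i - C (1 : ZMod 2)) = 1 - X i := by rw [map_one]; ring
  rwa [e] at h

end Primes


lemma dvd_subprod {α : Type*} {R : Type*} [CommMonoidWithZero R] [IsCancelMulZero R] [DecompositionMonoid R]
    (s : Finset α) (p : α → R) (hp : ∀ i ∈ s, Prime (p i)) {h : R}
    (hd : h ∣ ∏ i ∈ s, p i) : ∃ t ⊆ s, Associated h (∏ i ∈ t, p i) := by
  classical
  induction s using Finset.induction_on generalizing h with
  | empty =>
      refine ⟨∅, Finset.Subset.refl _, ?_⟩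
      rw [Finset.prod_empty] at hd ⊢
      exact associated_one_iff_isUnit.2 (isUnit_of_dvd_one hd)
  | @insert a s ha ih =>
      rw [Finset.prod_insert ha] at hd
      obtain ⟨d₁, d₂, h1, h2, rfl⟩ := exists_dvd_and_dvd_of_dvd_mul hd
      obtain ⟨t, hts, hat⟩ := ih (fun i hi => hp i (Finset.mem_insert_of_mem hi)) h2
      obtain ⟨e, he⟩ := h1
      rcases (hp a (Finset.mem_insert_self a s)).irreducible.isUnit_or_isUnit he with hu | hu
      · refine ⟨t, hts.trans (Finset.subset_insert a s), ?_⟩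
        exact Associated.trans ⟨hu.unit⁻¹, by
          rw [mul_comm d₁ d₂, mul_assoc]
          simp [IsUnit.mul_val_inv]⟩ hat
      · refine ⟨insert a t, Finset.insert_subset_insert a hts, ?_⟩
        rw [Finset.prod_insert (fun hmem => ha (hts hmem))]
        have had : Associated d₁ (p a) := ⟨hu.unit, by rw [hu.unit_spec]; exact he.symm⟩
        exact had.mul_mul hat

section PsmLemmas
variable {n : ℕ}

lemma psm_eq_prod (σ τ : Finset (Fin n)) :
    psm σ τ = ∏ k ∈ σ.disjSum τ,
      Sum.elim (fun i => (X i : MvPolynomial (Fin n) (ZMod 2))) (fun j => 1 - X j) k := by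
  rw [Finset.prod_disjSum]; rfl

lemma dvd_psm {σ τ : Finset (Fin n)} {h : MvPolynomial (Fin n) (ZMod 2)}
    (hdvd : h ∣ psm σ τ) :
    ∃ σ' τ', σ' ⊆ σ ∧ τ' ⊆ τ ∧ Associated h (psm σ' τ') := by
  rw [psm_eq_prod] at hdvd
  obtain ⟨t, hts, hat⟩ := dvd_subprod _ _
    (fun k _ => by cases k with
      | inl i => exact prime_X' i
      | inr j => exact prime_one_sub_X j) hdvd
  refine ⟨t.toLeft, t.toRight, ?_, ?_, ?_⟩
  · intro x hx
    exact (Finset.inl_mem_disjSum).1 (hts (Finset.mem_toLeft.1 hx))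
  · intro x hx
    exact (Finset.inr_mem_disjSum).1 (hts (Finset.mem_toRight.1 hx))
  · rw [psm_eq_prod, Finset.toLeft_disjSum_toRight]
    exact hat

lemma eval_psm_eq_one (a : Fin n → ZMod 2) (σ τ : Finset (Fin n)) :
    eval a (psm σ τ) = 1 ↔ (∀ i ∈ σ, a i = 1) ∧ (∀ j ∈ τ, a j = 0) := by
  have hx : ∀ x : ZMod 2, x = 1 ↔ x ≠ 0 := by decide
  have hy : ∀ x : ZMod 2, 1 - x ≠ 0 ↔ x = 0 := by decide
  rw [psm, map_mul, map_prod, map_prod]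
  simp only [eval_X, map_sub, map_one]
  rw [hx, mul_ne_zero_iff, Finset.prod_ne_zero_iff, Finset.prod_ne_zero_iff]
  constructor
  · rintro ⟨h1, h2⟩
    exact ⟨fun i hi => (hx _).2 (h1 i hi), fun j hj => (hy _).1 (h2 j hj)⟩
  · rintro ⟨h1, h2⟩
    exact ⟨fun i hi => (hx _).1 (h1 i hi), fun j hj => (hy _).2 (h2 j hj)⟩

lemma psm_subset {σ τ σ' τ' : Finset (Fin n)} (h2 : Disjoint σ' τ')
    (h : psm σ τ = psm σ' τ') : σ ⊆ σ' ∧ τ ⊆ τ' := by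
  have key : ∀ a : Fin n → ZMod 2,
      ((∀ i ∈ σ', a i = 1) ∧ (∀ j ∈ τ', a j = 0)) →
        ((∀ i ∈ σ, a i = 1) ∧ (∀ j ∈ τ, a j = 0)) := by
    intro a ha
    have h3 := eval_psm_eq_one a σ τ
    rw [h] at h3
    exact h3.1 ((eval_psm_eq_one a σ' τ').2 ha)
  constructor
  · intro i hi
    by_contra hi'
    set a : Fin n → ZMod 2 := fun j => if j ∈ σ' then 1 else 0 with ha
    have hacc : (∀ i ∈ σ', a i = 1) ∧ (∀ j ∈ τ', a j = 0) := by
      constructor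
      · intro x hx; simp [ha, hx]
      · intro x hx
        have hns : x ∉ σ' := Finset.disjoint_right.1 h2 hx
        simp [ha, hns]
    have h1 := (key a hacc).1 i hi
    rw [ha] at h1
    simp only [if_neg hi'] at h1
    exact one_ne_zero h1.symm
  · intro i hi
    by_contra hi'
    set a : Fin n → ZMod 2 := fun j => if j ∈ τ' then 0 else 1 with ha
    have hacc : (∀ i ∈ σ', a i = 1) ∧ (∀ j ∈ τ', a j = 0) := by
      constructor
      · intro x hx
        have hns : x ∉ τ' := Finset.disjoint_left.1 h2 hx
        simp [ha, hns]
      · intro x hx; simp [ha, hx]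
    have h1 := (key a hacc).2 i hi
    rw [ha] at h1
    simp only [if_neg hi'] at h1
    exact one_ne_zero h1

lemma psm_inj {σ τ σ' τ' : Finset (Fin n)} (h1 : Disjoint σ τ) (h2 : Disjoint σ' τ')
    (h : psm σ τ = psm σ' τ') : σ = σ' ∧ τ = τ' := by
  obtain ⟨a1, a2⟩ := psm_subset h2 h
  obtain ⟨b1, b2⟩ := psm_subset h1 h.symm
  exact ⟨Finset.Subset.antisymm a1 b1, Finset.Subset.antisymm a2 b2⟩

end PsmLemmas

lemma exists_gen_subset {n ℓ : ℕ} (σ τ : Fin ℓ → Finset (Fin n))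
    (hdisj : ∀ k, Disjoint (σ k) (τ k)) (I : Ideal (MvPolynomial (Fin n) (ZMod 2)))
    (hCF : ∀ f, IsMinimalPseudomonomial I f ↔ ∃ k, f = psm (σ k) (τ k))
    {σf τf : Finset (Fin n)} (hd : Disjoint σf τf) (hmem : psm σf τf ∈ I) :
    ∃ k, σ k ⊆ σf ∧ τ k ⊆ τf := by
  classical
  have hS : ∃ m : ℕ, ∃ σ' τ' : Finset (Fin n),
      σ' ⊆ σf ∧ τ' ⊆ τf ∧ psm σ' τ' ∈ I ∧ σ'.card + τ'.card = m :=
    ⟨_, σf, τf, Finset.Subset.refl _, Finset.Subset.refl _, hmem, rfl⟩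
  obtain ⟨σ', τ', hσ', hτ', hmemI, hcard⟩ := Nat.find_spec hS
  have hmin : IsMinimalPseudomonomial I (psm σ' τ') := by
    refine ⟨⟨σ', τ', hd.mono hσ' hτ', rfl⟩, hmemI, ?_⟩
    intro g hgdvd hgndvd hginI
    obtain ⟨σ'', τ'', hs1, hs2, hass⟩ := dvd_psm hgdvd
    have hpmem : psm σ'' τ'' ∈ I := by
      obtain ⟨u, hu⟩ := hass
      rw [← hu]
      exact I.mul_mem_right _ hginI
    have hge : Nat.find hS ≤ σ''.card + τ''.card :=
      Nat.find_le ⟨σ'', τ'', hs1.trans hσ', hs2.trans hτ', hpmem, rfl⟩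
    rw [← hcard] at hge
    have hc1 : σ''.card ≤ σ'.card := Finset.card_le_card hs1
    have hc2 : τ''.card ≤ τ'.card := Finset.card_le_card hs2
    have e1 : σ'' = σ' := Finset.eq_of_subset_of_card_le hs1 (by omega)
    have e2 : τ'' = τ' := Finset.eq_of_subset_of_card_le hs2 (by omega)
    rw [e1, e2] at hass
    exact hgndvd hass.symm.dvd
  obtain ⟨k, hk⟩ := (hCF _).1 hmin
  obtain ⟨e1, e2⟩ := psm_inj (hd.mono hσ' hτ') (hdisj k) hk
  exact ⟨k, e1 ▸ hσ', e2 ▸ hτ'⟩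

theorem polarization_span_canonical_form {n ℓ : ℕ}
    (σ τ : Fin ℓ → Finset (Fin n)) (hdisj : ∀ k, Disjoint (σ k) (τ k))
    (I : Ideal (MvPolynomial (Fin n) (ZMod 2)))
    (hI : I = Ideal.span (Set.range fun k => psm (σ k) (τ k)))
    (hCF : ∀ f, IsMinimalPseudomonomial I f ↔ ∃ k, f = psm (σ k) (τ k)) :
    Ideal.span (Set.range fun k => polz (σ k) (τ k)) =
      Ideal.span {m : MvPolynomial (Fin n ⊕ Fin n) (ZMod 2) |
        ∃ σf τf : Finset (Fin n), Disjoint σf τf ∧ psm σf τf ∈ I ∧ m = polz σf τf} ∧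
    ∀ J : Ideal (MvPolynomial (Fin n ⊕ Fin n) (ZMod 2)),
      (∀ σf τf : Finset (Fin n), Disjoint σf τf → psm σf τf ∈ I → polz σf τf ∈ J) →
      Ideal.span (Set.range fun k => polz (σ k) (τ k)) ≤ J := by
  have key : ∀ σf τf : Finset (Fin n), Disjoint σf τf → psm σf τf ∈ I →
      polz σf τf ∈ Ideal.span (Set.range fun k => polz (σ k) (τ k)) := by
    intro σf τf hd hmem
    obtain ⟨k, h1, h2⟩ := exists_gen_subset σ τ hdisj I hCF hd hmem
    have heq : polz σf τf = polz (σ k) (τ k) *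
        ((∏ i ∈ σf \ σ k, X (Sum.inl i)) * ∏ j ∈ τf \ τ k, X (Sum.inr j)) := by
      rw [polz, polz, ← Finset.prod_sdiff h1, ← Finset.prod_sdiff h2]
      ring
    rw [heq]
    exact Ideal.mul_mem_right _ _ (Ideal.subset_span ⟨k, rfl⟩)
  have hgen : ∀ k, psm (σ k) (τ k) ∈ I := by
    intro k; rw [hI]; exact Ideal.subset_span ⟨k, rfl⟩
  constructor
  · apply le_antisymm
    · rw [Ideal.span_le]
      rintro _ ⟨k, rfl⟩
      exact Ideal.subset_span ⟨σ k, τ k, hdisj k, hgen k, rfl⟩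
    · rw [Ideal.span_le]
      rintro m ⟨σf, τf, hd, hmem, rfl⟩
      exact key σf τf hd hmem
  · intro J hJ
    rw [Ideal.span_le]
    rintro _ ⟨k, rfl⟩
    exact hJ (σ k) (τ k) (hdisj k) (hgen k)
end

section
/- Let I be a pseudomonomial ideal in canonical form in R = F_2[x_1,...,x_n] and let p be a pseudomonomial prime, i.e., an ideal generated by a subset of {x_i : i ∈ A} ∪ {1−x_j : j ∈ B} with A, B disjoint subsets of [n]. Then I ⊆ p if and only if P(I) ⊆ P(p), where P denotes polarization; moreover P(p) is a prime ideal of S = F_2[x_1,...,x_n,y_1,...,y_n] generated by a subset of the variables. -/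
open MvPolynomial

lemma mem_of_dvd_mem {R : Type*} [CommRing R] {I : Ideal R} {a b : R}
    (ha : a ∈ I) (h : a ∣ b) : b ∈ I := by
  obtain ⟨c, rfl⟩ := h; exact I.mul_mem_right c ha

open Classical in
lemma psm_mem_iff {n : ℕ} (σ τ : Finset (Fin n)) (hd : Disjoint σ τ)
    (A B : Set (Fin n)) (hAB : Disjoint A B) :
    psm σ τ ∈ Ideal.span ((fun i => (X i : MvPolynomial (Fin n) (ZMod 2))) '' A
      ∪ (fun j => 1 - X j) '' B) ↔
    (∃ i ∈ σ, i ∈ A) ∨ (∃ j ∈ τ, j ∈ B) := by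
  constructor
  · intro hmem
    by_contra hC
    push_neg at hC
    obtain ⟨h1, h2⟩ := hC
    set v : Fin n → ZMod 2 := fun i => if i ∈ B ∨ i ∈ σ then 1 else 0 with hv
    have hker : Ideal.span ((fun i => (X i : MvPolynomial (Fin n) (ZMod 2))) '' A
        ∪ (fun j => 1 - X j) '' B) ≤ RingHom.ker (eval v) := by
      rw [Ideal.span_le]
      rintro f (⟨i, hi, rfl⟩ | ⟨j, hj, rfl⟩)
      · have hiB : i ∉ B := Set.disjoint_left.mp hAB hi
        have hiσ : i ∉ σ := fun h => h1 i h hi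
        simp [RingHom.mem_ker, v, hiB, hiσ]
      · simp [RingHom.mem_ker, v, hj]
    have h0 := hker hmem
    rw [RingHom.mem_ker, psm] at h0
    have e1 : ∏ i ∈ σ, eval v (X i) = 1 :=
      Finset.prod_eq_one (fun i hi => by simp [v, hi])
    have e2 : ∏ j ∈ τ, eval v (1 - X j) = 1 :=
      Finset.prod_eq_one (fun j hj => by
        have hjσ : j ∉ σ := Finset.disjoint_right.mp hd hj
        simp [v, hjσ, h2 j hj])
    rw [map_mul, map_prod, map_prod, e1, e2] at h0
    simp at h0
  · rintro (⟨i, hiσ, hiA⟩ | ⟨j, hjτ, hjB⟩)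
    · exact mem_of_dvd_mem (Ideal.subset_span (Or.inl ⟨i, hiA, rfl⟩))
        (dvd_mul_of_dvd_left (Finset.dvd_prod_of_mem _ hiσ) _)
    · exact mem_of_dvd_mem (Ideal.subset_span (Or.inr ⟨j, hjB, rfl⟩))
        (dvd_mul_of_dvd_right (Finset.dvd_prod_of_mem _ hjτ) _)

open Classical in
lemma polz_mem_iff {n : ℕ} (σ τ : Finset (Fin n)) (A B : Set (Fin n)) :
    polz σ τ ∈ Ideal.span
      ((fun i => (X (Sum.inl i) : MvPolynomial (Fin n ⊕ Fin n) (ZMod 2))) '' A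
      ∪ (fun j => X (Sum.inr j)) '' B) ↔
    (∃ i ∈ σ, i ∈ A) ∨ (∃ j ∈ τ, j ∈ B) := by
  constructor
  · intro hmem
    by_contra hC
    push_neg at hC
    obtain ⟨h1, h2⟩ := hC
    set u : Fin n ⊕ Fin n → ZMod 2 := fun z =>
      Sum.elim (fun i => if i ∈ A then 0 else 1) (fun j => if j ∈ B then 0 else 1) z with hu
    have hker : Ideal.span
        ((fun i => (X (Sum.inl i) : MvPolynomial (Fin n ⊕ Fin n) (ZMod 2))) '' A
        ∪ (fun j => X (Sum.inr j)) '' B) ≤ RingHom.ker (eval u) := by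
      rw [Ideal.span_le]
      rintro f (⟨i, hi, rfl⟩ | ⟨j, hj, rfl⟩)
      · simp [RingHom.mem_ker, u, hi]
      · simp [RingHom.mem_ker, u, hj]
    have h0 := hker hmem
    rw [RingHom.mem_ker, polz] at h0
    have e1 : ∏ i ∈ σ, eval u (X (Sum.inl i)) = 1 :=
      Finset.prod_eq_one (fun i hi => by simp [u, fun h => h1 i hi h])
    have e2 : ∏ j ∈ τ, eval u (X (Sum.inr j)) = 1 :=
      Finset.prod_eq_one (fun j hj => by simp [u, fun h => h2 j hj h])
    rw [map_mul, map_prod, map_prod, e1, e2] at h0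
    simp at h0
  · rintro (⟨i, hiσ, hiA⟩ | ⟨j, hjτ, hjB⟩)
    · exact mem_of_dvd_mem (Ideal.subset_span (Or.inl ⟨i, hiA, rfl⟩))
        (dvd_mul_of_dvd_left (Finset.dvd_prod_of_mem _ hiσ) _)
    · exact mem_of_dvd_mem (Ideal.subset_span (Or.inr ⟨j, hjB, rfl⟩))
        (dvd_mul_of_dvd_right (Finset.dvd_prod_of_mem _ hjτ) _)

lemma span_X_isPrime {ι : Type*} (W : Set ι) :
    (Ideal.span (MvPolynomial.X '' W : Set (MvPolynomial ι (ZMod 2)))).IsPrime := by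
  classical
  set g : ι → MvPolynomial ι (ZMod 2) := fun i => if i ∈ W then 0 else X i with hg
  have hker : Ideal.span (MvPolynomial.X '' W : Set (MvPolynomial ι (ZMod 2)))
      = RingHom.ker (aeval (R := ZMod 2) g) := by
    apply le_antisymm
    · rw [Ideal.span_le]
      rintro f ⟨w, hw, rfl⟩
      simp [RingHom.mem_ker, g, hw]
    · intro f hf
      have key : (Ideal.Quotient.mkₐ (ZMod 2)
            (Ideal.span (MvPolynomial.X '' W))).comp (aeval g) =
          Ideal.Quotient.mkₐ (ZMod 2) (Ideal.span (MvPolynomial.X '' W)) := by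
        apply MvPolynomial.algHom_ext
        intro i
        by_cases hi : i ∈ W
        · simp only [AlgHom.comp_apply, aeval_X, g, if_pos hi, map_zero,
            Ideal.Quotient.mkₐ_eq_mk]
          have hXi : (X i : MvPolynomial ι (ZMod 2)) ∈ Ideal.span (MvPolynomial.X '' W) :=
            Ideal.subset_span (Set.mem_image_of_mem _ hi)
          exact (Ideal.Quotient.eq_zero_iff_mem.mpr hXi).symm
        · simp [g, hi]
      have hq := DFunLike.congr_fun key f
      rw [RingHom.mem_ker] at hf
      simp only [AlgHom.comp_apply, hf, map_zero, Ideal.Quotient.mkₐ_eq_mk] at hq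
      exact Ideal.Quotient.eq_zero_iff_mem.mp hq.symm
  rw [hker]
  exact RingHom.ker_isPrime _

theorem polarization_pseudomonomial_prime {n ℓ : ℕ}
    (σ τ : Fin ℓ → Finset (Fin n)) (hdisj : ∀ k, Disjoint (σ k) (τ k))
    (I : Ideal (MvPolynomial (Fin n) (ZMod 2)))
    (hI : I = Ideal.span (Set.range fun k => psm (σ k) (τ k)))
    (hCF : ∀ f, IsMinimalPseudomonomial I f ↔ ∃ k, f = psm (σ k) (τ k))
    (A B : Set (Fin n)) (hAB : Disjoint A B)
    (p : Ideal (MvPolynomial (Fin n) (ZMod 2)))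
    (hp : p = Ideal.span ((fun i => X i) '' A ∪ (fun j => 1 - X j) '' B))
    (Pp : Ideal (MvPolynomial (Fin n ⊕ Fin n) (ZMod 2)))
    (hPp : Pp = Ideal.span
      ((fun i => X (Sum.inl i)) '' A ∪ (fun j => X (Sum.inr j)) '' B)) :
    (I ≤ p ↔ Ideal.span (Set.range fun k => polz (σ k) (τ k)) ≤ Pp) ∧
      Pp.IsPrime ∧
      ∃ W : Set (Fin n ⊕ Fin n), Pp = Ideal.span (MvPolynomial.X '' W) := by
  subst hI hp hPp
  have hW : ((fun i => (X (Sum.inl i) : MvPolynomial (Fin n ⊕ Fin n) (ZMod 2))) '' A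
      ∪ (fun j => X (Sum.inr j)) '' B)
      = MvPolynomial.X '' (Sum.inl '' A ∪ Sum.inr '' B) := by
    simp [Set.image_union, Set.image_image]
  refine ⟨?_, ?_, ⟨Sum.inl '' A ∪ Sum.inr '' B, by rw [hW]⟩⟩
  · rw [Ideal.span_le, Ideal.span_le, Set.range_subset_iff, Set.range_subset_iff]
    constructor
    · intro h k
      exact (polz_mem_iff _ _ A B).mpr
        ((psm_mem_iff _ _ (hdisj k) A B hAB).mp (h k))
    · intro h k
      exact (psm_mem_iff _ _ (hdisj k) A B hAB).mpr
        ((polz_mem_iff _ _ A B).mp (h k))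
  · rw [hW]; exact span_X_isPrime _
end

section
/- Let I be a pseudomonomial ideal in canonical form in F_2[x_1,...,x_n] and p a pseudomonomial prime. Then I ⊆ p if and only if every generator in the canonical form of I is divisible by some generator of p. -/
open MvPolynomial

lemma X_dvd_psm {n : ℕ} {σ τ : Finset (Fin n)} {i : Fin n} (hi : i ∈ σ) :
    X i ∣ psm σ τ :=
  dvd_mul_of_dvd_left (Finset.dvd_prod_of_mem _ hi) _

lemma oneSubX_dvd_psm {n : ℕ} {σ τ : Finset (Fin n)} {j : Fin n} (hj : j ∈ τ) :
    (1 - X j) ∣ psm σ τ :=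
  dvd_mul_of_dvd_right (Finset.dvd_prod_of_mem _ hj) _

theorem pseudomonomial_ideal_le_prime_iff {n ℓ : ℕ}
    (σ τ : Fin ℓ → Finset (Fin n)) (hdisj : ∀ k, Disjoint (σ k) (τ k))
    (I : Ideal (MvPolynomial (Fin n) (ZMod 2)))
    (hI : I = Ideal.span (Set.range fun k => psm (σ k) (τ k)))
    (hCF : ∀ f, IsMinimalPseudomonomial I f ↔ ∃ k, f = psm (σ k) (τ k))
    (A B : Set (Fin n)) (hAB : Disjoint A B)
    (p : Ideal (MvPolynomial (Fin n) (ZMod 2)))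
    (hp : p = Ideal.span ((fun i => X i) '' A ∪ (fun j => 1 - X j) '' B)) :
    I ≤ p ↔
      ∀ k, (∃ i ∈ A, X i ∣ psm (σ k) (τ k)) ∨
        (∃ j ∈ B, (1 - X j) ∣ psm (σ k) (τ k)) := by
  classical
  subst hI hp
  constructor
  · intro hle k
    by_contra hcon
    push_neg at hcon
    obtain ⟨h1, h2⟩ := hcon
    have hσA : ∀ i ∈ σ k, i ∉ A := fun i hi hiA => h1 i hiA (X_dvd_psm hi)
    have hτB : ∀ j ∈ τ k, j ∉ B := fun j hj hjB => h2 j hjB (oneSubX_dvd_psm hj)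
    set c : Fin n → ZMod 2 := fun i => if i ∈ B ∨ i ∈ σ k then 1 else 0 with hc
    have e1 : ∀ i ∈ σ k, c i = 1 := fun i hi => by simp [hc, hi]
    have e2 : ∀ j ∈ τ k, c j = 0 := by
      intro j hj
      have hjσ : j ∉ σ k := Finset.disjoint_right.mp (hdisj k) hj
      simp [hc, hjσ, hτB j hj]
    have hker : Ideal.span ((fun i => X i) '' A ∪ (fun j => 1 - X j) '' B)
        ≤ RingHom.ker (eval c) := by
      rw [Ideal.span_le]
      rintro f (⟨i, hiA, rfl⟩ | ⟨j, hjB, rfl⟩)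
      · have hiB : i ∉ B := fun h => hAB.le_bot ⟨hiA, h⟩
        have hiσ : i ∉ σ k := fun h => hσA i h hiA
        simp [RingHom.mem_ker, hc, hiB, hiσ]
      · simp [RingHom.mem_ker, hc, hjB]
    have hmem : psm (σ k) (τ k) ∈
        Ideal.span (Set.range fun k => psm (σ k) (τ k)) :=
      Ideal.subset_span ⟨k, rfl⟩
    have h0 : eval c (psm (σ k) (τ k)) = 0 := hker (hle hmem)
    have h1' : eval c (psm (σ k) (τ k)) = 1 := by
      rw [psm, map_mul, map_prod, map_prod]
      simp only [eval_X, map_sub, map_one]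
      rw [Finset.prod_congr rfl e1,
        Finset.prod_congr rfl (fun j hj => by rw [e2 j hj, sub_zero] :
          ∀ j ∈ τ k, 1 - c j = 1)]
      simp
    rw [h0] at h1'
    exact absurd h1' (by decide)
  · intro h
    rw [Ideal.span_le]
    rintro f ⟨k, rfl⟩
    show psm (σ k) (τ k) ∈ Ideal.span ((fun i => X i) '' A ∪ (fun j => 1 - X j) '' B)
    rcases h k with ⟨i, hiA, g, hg⟩ | ⟨j, hjB, g, hg⟩
    · rw [hg]
      exact Ideal.mul_mem_right _ _ (Ideal.subset_span (Or.inl ⟨i, hiA, rfl⟩))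
    · rw [hg]
      exact Ideal.mul_mem_right _ _ (Ideal.subset_span (Or.inr ⟨j, hjB, rfl⟩))
end

section
/- Let C ⊆ {0,1}^n be a neural code and J_C its neural ideal in R = F_2[x_1,...,x_n]. Let D = ⟨x_i + y_i − 1 : i ∈ [n]⟩ ⊆ S = F_2[x_1,...,x_n,y_1,...,y_n]. Then S/(P(J_C) + D) ≅ R/J_C as rings. -/
open MvPolynomial

/-- The indicator pseudomonomial of a word `c ∈ {0,1}ⁿ`:
`∏_{c_i = 1} x_i · ∏_{c_j = 0} (1 - x_j)`. -/
noncomputable def indic {n : ℕ} (c : Fin n → ZMod 2) :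
    MvPolynomial (Fin n) (ZMod 2) :=
  ∏ i : Fin n, (if c i = 1 then X i else 1 - X i)

/-- The neural ideal of a code `C ⊆ {0,1}ⁿ`. -/
noncomputable def neuralIdeal {n : ℕ} (C : Set (Fin n → ZMod 2)) :
    Ideal (MvPolynomial (Fin n) (ZMod 2)) :=
  Ideal.span {f | ∃ c ∉ C, f = indic c}

/-- The polarization of the neural ideal: the squarefree monomial ideal generated by
the polarizations of the minimal pseudomonomials of `J_C`. -/
noncomputable def polarNeuralIdeal {n : ℕ} (C : Set (Fin n → ZMod 2)) :
    Ideal (MvPolynomial (Fin n ⊕ Fin n) (ZMod 2)) :=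
  Ideal.span {m | ∃ σ τ : Finset (Fin n), Disjoint σ τ ∧
    IsMinimalPseudomonomial (neuralIdeal C) (psm σ τ) ∧ m = polz σ τ}

lemma prime_algEquiv_map {R A B : Type*} [CommSemiring R] [CommRing A] [CommRing B]
    [Algebra R A] [Algebra R B] (e : A ≃ₐ[R] B) {p : A} (hp : Prime p) : Prime (e p) :=
  (MulEquiv.prime_iff e).mpr hp

lemma prime_X_sub_C'_s8 {σ : Type*} {R : Type*} [CommRing R] [IsDomain R] (i : σ) (a : R) :
    Prime (X i - C a : MvPolynomial σ R) := by
  classical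
  have key : Prime (X (⟨i, rfl⟩ : ({i} : Set σ)) - C a :
      MvPolynomial ({i} : Set σ) R) := by
    have h1 : Prime (Polynomial.X - Polynomial.C a : Polynomial R) := Polynomial.prime_X_sub_C a
    let e0 : MvPolynomial ({i} : Set σ) R ≃ₐ[R] MvPolynomial PUnit.{1} R :=
      renameEquiv R (Equiv.equivPUnit _)
    let e : MvPolynomial ({i} : Set σ) R ≃ₐ[R] Polynomial R :=
      e0.trans (pUnitAlgEquiv R)
    have h2 := prime_algEquiv_map e.symm h1
    have h3 : e.symm (Polynomial.X - Polynomial.C a) =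
        X (⟨i, rfl⟩ : ({i} : Set σ)) - C a := by
      apply e.injective
      simp [e, e0, map_sub]
    rwa [h3] at h2
  have := (prime_rename_iff ({i} : Set σ) (p := X (⟨i, rfl⟩ : ({i} : Set σ)) - C a)).mpr key
  simpa [map_sub] using this

lemma prime_X'_s8 {σ : Type*} {R : Type*} [CommRing R] [IsDomain R] (i : σ) :
    Prime (X i : MvPolynomial σ R) := by
  simpa using prime_X_sub_C'_s8 i (0 : R)

lemma prime_one_sub_X_s8 {σ : Type*} {R : Type*} [CommRing R] [IsDomain R] (i : σ) :
    Prime (1 - X i : MvPolynomial σ R) := by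
  have := (prime_X_sub_C'_s8 i (1 : R)).neg
  simpa [neg_sub] using this

lemma psm_eq_prod_s8 {n : ℕ} {σ τ : Finset (Fin n)} (h : Disjoint σ τ) :
    psm σ τ = ∏ i ∈ σ ∪ τ, (if i ∈ σ then X i else (1 - X i)) := by
  rw [psm, Finset.prod_union h]
  congr 1
  · exact (Finset.prod_congr rfl fun i hi => by simp [hi]).symm
  · refine (Finset.prod_congr rfl fun i hi => ?_).symm
    have : i ∉ σ := fun hs => (Finset.disjoint_left.mp h hs) hi
    simp [this]

lemma dvd_prod_primes {M ι : Type*} [CommMonoidWithZero M] [IsCancelMulZero M] [DecidableEq ι] {p : ι → M}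
    (s : Finset ι) (hp : ∀ i ∈ s, Prime (p i)) :
    ∀ g, g ∣ ∏ i ∈ s, p i → ∃ t, t ⊆ s ∧ Associated g (∏ i ∈ t, p i) := by
  induction s using Finset.induction_on with
  | empty =>
    intro g hg
    exact ⟨∅, Finset.Subset.refl _, by
      simpa [associated_one_iff_isUnit] using isUnit_of_dvd_one (by simpa using hg)⟩
  | @insert a s ha ih =>
    intro g hg
    rw [Finset.prod_insert ha] at hg
    have hpa : Prime (p a) := hp a (Finset.mem_insert_self _ _)
    have hps : ∀ i ∈ s, Prime (p i) := fun i hi => hp i (Finset.mem_insert_of_mem hi)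
    by_cases hdvd : p a ∣ g
    · obtain ⟨g', rfl⟩ := hdvd
      have hg' : g' ∣ ∏ i ∈ s, p i :=
        (mul_dvd_mul_iff_left hpa.ne_zero).mp hg
      obtain ⟨t, hts, hassoc⟩ := ih hps g' hg'
      have hat : a ∉ t := fun h => ha (hts h)
      exact ⟨insert a t, Finset.insert_subset_insert _ hts,
        by rw [Finset.prod_insert hat]; exact Associated.mul_left _ hassoc⟩
    · obtain ⟨c, hc⟩ := hg
      have hpac : p a ∣ c := by
        have : p a ∣ g * c := ⟨∏ i ∈ s, p i, by rw [← hc]⟩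
        exact (hpa.dvd_or_dvd this).resolve_left hdvd
      obtain ⟨c', rfl⟩ := hpac
      have hgs : g ∣ ∏ i ∈ s, p i := by
        refine ⟨c', mul_left_cancel₀ hpa.ne_zero ?_⟩
        rw [hc, mul_left_comm]
      obtain ⟨t, hts, hassoc⟩ := ih hps g hgs
      exact ⟨t, hts.trans (Finset.subset_insert _ _), hassoc⟩

/-- Classification of divisors of a pseudomonomial. -/
lemma dvd_psm_classify {n : ℕ} {σ τ : Finset (Fin n)} (h : Disjoint σ τ)
    {g : MvPolynomial (Fin n) (ZMod 2)} (hg : g ∣ psm σ τ) :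
    ∃ σ' τ', σ' ⊆ σ ∧ τ' ⊆ τ ∧ Disjoint σ' τ' ∧ Associated g (psm σ' τ') := by
  rw [psm_eq_prod_s8 h] at hg
  obtain ⟨t, hts, hassoc⟩ := dvd_prod_primes (σ ∪ τ)
    (fun i _ => by split_ifs; exacts [prime_X'_s8 i, prime_one_sub_X_s8 i]) g hg
  refine ⟨t ∩ σ, t ∩ τ, Finset.inter_subset_right, Finset.inter_subset_right,
    h.mono Finset.inter_subset_right Finset.inter_subset_right, ?_⟩
  have hdisj' : Disjoint (t ∩ σ) (t ∩ τ) :=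
    h.mono Finset.inter_subset_right Finset.inter_subset_right
  have hunion : (t ∩ σ) ∪ (t ∩ τ) = t := by
    rw [← Finset.inter_union_distrib_left]
    exact Finset.inter_eq_left.mpr hts
  have heq : psm (t ∩ σ) (t ∩ τ) = ∏ i ∈ t, (if i ∈ σ then X i else (1 - X i)) := by
    rw [psm_eq_prod_s8 hdisj', hunion]
    refine Finset.prod_congr rfl fun i hi => ?_
    by_cases h' : i ∈ σ <;> simp [h', Finset.mem_inter, hi]
  rw [heq]
  exact hassoc

lemma descend {n : ℕ} {J : Ideal (MvPolynomial (Fin n) (ZMod 2))} {σ τ : Finset (Fin n)}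
    (hdisj : Disjoint σ τ) (hmem : psm σ τ ∈ J)
    (hmin : ¬ IsMinimalPseudomonomial J (psm σ τ)) :
    ∃ σ' τ', σ' ⊆ σ ∧ τ' ⊆ τ ∧ Disjoint σ' τ' ∧ σ'.card + τ'.card < σ.card + τ.card ∧
      psm σ' τ' ∈ J := by
  have hps : IsPseudomonomial (psm σ τ) := ⟨σ, τ, hdisj, rfl⟩
  rw [IsMinimalPseudomonomial, not_and, not_and] at hmin
  have := hmin hps hmem
  push_neg at this
  obtain ⟨g, hgdvd, hndvd, hgJ⟩ := this
  obtain ⟨σ', τ', hσ', hτ', hdisj', hassoc⟩ := dvd_psm_classify hdisj hgdvd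
  have hmemJ : psm σ' τ' ∈ J := by
    obtain ⟨u, hu⟩ := hassoc
    rw [← hu]
    exact Ideal.mul_mem_right _ _ hgJ
  have hne : ¬(σ' = σ ∧ τ' = τ) := by
    rintro ⟨rfl, rfl⟩
    exact hndvd hassoc.symm.dvd
  refine ⟨σ', τ', hσ', hτ', hdisj', ?_, hmemJ⟩
  have hσc : σ'.card ≤ σ.card := Finset.card_le_card hσ'
  have hτc : τ'.card ≤ τ.card := Finset.card_le_card hτ'
  by_cases hs : σ' = σ
  · have : τ' ≠ τ := fun h => hne ⟨hs, h⟩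
    have : τ'.card < τ.card := Finset.card_lt_card (lt_of_le_of_ne hτ' this)
    omega
  · have : σ'.card < σ.card := Finset.card_lt_card (lt_of_le_of_ne hσ' hs)
    omega

lemma exists_minimal_psm {n : ℕ} (J : Ideal (MvPolynomial (Fin n) (ZMod 2))) :
    ∀ (N : ℕ) (σ τ : Finset (Fin n)), σ.card + τ.card ≤ N → Disjoint σ τ → psm σ τ ∈ J →
    ∃ σ' τ', σ' ⊆ σ ∧ τ' ⊆ τ ∧ Disjoint σ' τ' ∧ IsMinimalPseudomonomial J (psm σ' τ') := by
  intro N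
  induction N with
  | zero =>
    intro σ τ hcard hdisj hmem
    by_cases hmin : IsMinimalPseudomonomial J (psm σ τ)
    · exact ⟨σ, τ, Finset.Subset.refl _, Finset.Subset.refl _, hdisj, hmin⟩
    · obtain ⟨σ', τ', _, _, _, hlt, _⟩ := descend hdisj hmem hmin
      omega
  | succ N ih =>
    intro σ τ hcard hdisj hmem
    by_cases hmin : IsMinimalPseudomonomial J (psm σ τ)
    · exact ⟨σ, τ, Finset.Subset.refl _, Finset.Subset.refl _, hdisj, hmin⟩
    · obtain ⟨σ', τ', hσ', hτ', hdisj', hlt, hmem'⟩ := descend hdisj hmem hmin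
      obtain ⟨σ'', τ'', h1, h2, h3, h4⟩ := ih σ' τ' (by omega) hdisj' hmem'
      exact ⟨σ'', τ'', h1.trans hσ', h2.trans hτ', h3, h4⟩

lemma polz_dvd_polz {n : ℕ} {σ' τ' σ τ : Finset (Fin n)} (hσ : σ' ⊆ σ) (hτ : τ' ⊆ τ) :
    polz σ' τ' ∣ polz σ τ :=
  mul_dvd_mul (Finset.prod_dvd_prod_of_subset _ _ _ hσ) (Finset.prod_dvd_prod_of_subset _ _ _ hτ)

/-- If `psm σ τ ∈ J_C` with `σ, τ` disjoint, then `polz σ τ ∈ P(J_C)`. -/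
lemma polz_mem_polar {n : ℕ} (C : Set (Fin n → ZMod 2)) {σ τ : Finset (Fin n)}
    (hdisj : Disjoint σ τ) (hmem : psm σ τ ∈ neuralIdeal C) :
    polz σ τ ∈ polarNeuralIdeal C := by
  obtain ⟨σ', τ', hσ', hτ', hdisj', hmin⟩ :=
    exists_minimal_psm (neuralIdeal C) (σ.card + τ.card) σ τ le_rfl hdisj hmem
  have hgen : polz σ' τ' ∈ polarNeuralIdeal C :=
    Ideal.subset_span ⟨σ', τ', hdisj', hmin, rfl⟩
  obtain ⟨c, hc⟩ := polz_dvd_polz hσ' hτ'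
  rw [hc]
  exact Ideal.mul_mem_right _ _ hgen

/-- Depolarization map `S → R`. -/
noncomputable def depol {n : ℕ} : MvPolynomial (Fin n ⊕ Fin n) (ZMod 2) →ₐ[ZMod 2]
    MvPolynomial (Fin n) (ZMod 2) :=
  aeval (Sum.elim X (fun i => 1 - X i))

/-- Section `R → S`. -/
noncomputable def sec {n : ℕ} : MvPolynomial (Fin n) (ZMod 2) →ₐ[ZMod 2]
    MvPolynomial (Fin n ⊕ Fin n) (ZMod 2) :=
  aeval (fun i => X (Sum.inl i))

lemma depol_sec {n : ℕ} (r : MvPolynomial (Fin n) (ZMod 2)) : depol (sec r) = r := by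
  have : (depol.comp sec : MvPolynomial (Fin n) (ZMod 2) →ₐ[ZMod 2] _) = AlgHom.id _ _ := by
    apply algHom_ext
    intro i
    simp [depol, sec]
  calc depol (sec r) = (depol.comp sec) r := rfl
    _ = r := by rw [this]; rfl

lemma prod_sub_prod_mem {R ι : Type*} [CommRing R] (I : Ideal R) (s : Finset ι) (a b : ι → R)
    (h : ∀ i ∈ s, a i - b i ∈ I) : (∏ i ∈ s, a i) - (∏ i ∈ s, b i) ∈ I := by
  classical
  induction s using Finset.induction_on with
  | empty => simp
  | @insert j s hj ih =>
    rw [Finset.prod_insert hj, Finset.prod_insert hj]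
    have key : a j * ∏ i ∈ s, a i - b j * ∏ i ∈ s, b i
        = a j * ((∏ i ∈ s, a i) - ∏ i ∈ s, b i) + (a j - b j) * ∏ i ∈ s, b i := by ring
    rw [key]
    exact I.add_mem (Ideal.mul_mem_left _ _ (ih fun i hi => h i (Finset.mem_insert_of_mem hi)))
      (Ideal.mul_mem_right _ _ (h j (Finset.mem_insert_self _ _)))

/-- The depolarization ideal `D`. -/
noncomputable def Dideal (n : ℕ) : Ideal (MvPolynomial (Fin n ⊕ Fin n) (ZMod 2)) :=
  Ideal.span (Set.range fun i : Fin n =>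
    (X (Sum.inl i) + X (Sum.inr i) - 1 : MvPolynomial (Fin n ⊕ Fin n) (ZMod 2)))

lemma sub_sec_depol_mem {n : ℕ} (s : MvPolynomial (Fin n ⊕ Fin n) (ZMod 2)) :
    s - sec (depol s) ∈ Dideal n := by
  induction s using MvPolynomial.induction_on with
  | C a => simp [depol, sec, algebraMap_eq]
  | add p q hp hq =>
    have : p + q - sec (depol (p + q)) = (p - sec (depol p)) + (q - sec (depol q)) := by
      simp only [map_add]; ring
    rw [this]; exact (Dideal n).add_mem hp hq
  | mul_X p v hp =>
    have hX : (X v : MvPolynomial (Fin n ⊕ Fin n) (ZMod 2)) - sec (depol (X v)) ∈ Dideal n := by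
      cases v with
      | inl i => simp [depol, sec]
      | inr i =>
        have : (X (Sum.inr i) : MvPolynomial (Fin n ⊕ Fin n) (ZMod 2)) - sec (depol (X (Sum.inr i)))
            = X (Sum.inl i) + X (Sum.inr i) - 1 := by
          simp [depol, sec, map_sub, map_one]
          ring
        rw [this]
        exact Ideal.subset_span ⟨i, rfl⟩
    have key : p * X v - sec (depol (p * X v))
        = (p - sec (depol p)) * X v + sec (depol p) * (X v - sec (depol (X v))) := by
      simp only [map_mul]; ring
    rw [key]
    exact (Dideal n).add_mem (Ideal.mul_mem_right _ _ hp) (Ideal.mul_mem_left _ _ hX)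

lemma indic_eq_psm {n : ℕ} (c : Fin n → ZMod 2) :
    indic c = psm (Finset.univ.filter (fun i => c i = 1))
      (Finset.univ.filter (fun i => ¬ c i = 1)) := by
  rw [indic, psm, Finset.prod_ite]

lemma sec_indic_mem {n : ℕ} (C : Set (Fin n → ZMod 2)) {c : Fin n → ZMod 2} (hc : c ∉ C) :
    sec (indic c) ∈ polarNeuralIdeal C + Dideal n := by
  classical
  set σ := Finset.univ.filter (fun i => c i = 1) with hσ
  set τ := Finset.univ.filter (fun i => ¬ c i = 1) with hτ
  have hdisj : Disjoint σ τ := by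
    rw [Finset.disjoint_left]
    intro a ha hb
    simp [hσ, hτ] at ha hb
    exact hb ha
  have hmem : psm σ τ ∈ neuralIdeal C := by
    rw [← indic_eq_psm]
    exact Ideal.subset_span ⟨c, hc, rfl⟩
  have hpol : polz σ τ ∈ polarNeuralIdeal C := polz_mem_polar C hdisj hmem
  -- sec (indic c) - polz σ τ ∈ D
  have hsec : sec (indic c) = ∏ i : Fin n,
      (if c i = 1 then (X (Sum.inl i) : MvPolynomial (Fin n ⊕ Fin n) (ZMod 2))
        else 1 - X (Sum.inl i)) := by
    rw [indic, map_prod]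
    refine Finset.prod_congr rfl fun i _ => ?_
    by_cases h : c i = 1 <;> simp [h, sec, map_sub, map_one]
  have hpolz : polz σ τ = ∏ i : Fin n,
      (if c i = 1 then (X (Sum.inl i) : MvPolynomial (Fin n ⊕ Fin n) (ZMod 2))
        else X (Sum.inr i)) := by
    rw [polz, ← Finset.prod_ite]
  have hdiff : sec (indic c) - polz σ τ ∈ Dideal n := by
    rw [hsec, hpolz]
    refine prod_sub_prod_mem _ _ _ _ fun i _ => ?_
    by_cases h : c i = 1
    · simp [h]
    · simp only [h, if_false]
      have : (1 - X (Sum.inl i) : MvPolynomial (Fin n ⊕ Fin n) (ZMod 2)) - X (Sum.inr i)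
          = -(X (Sum.inl i) + X (Sum.inr i) - 1) := by ring
      rw [this]
      exact (Dideal n).neg_mem (Ideal.subset_span ⟨i, rfl⟩)
  have : sec (indic c) = polz σ τ + (sec (indic c) - polz σ τ) := by ring
  rw [this]
  exact Ideal.add_mem _ (Ideal.mem_sup_left hpol) (Ideal.mem_sup_right hdiff)

lemma depol_polz {n : ℕ} (σ τ : Finset (Fin n)) : depol (polz σ τ) = psm σ τ := by
  rw [polz, psm, map_mul, map_prod, map_prod]
  simp [depol]


theorem depolarization_quotient_iso {n : ℕ} (C : Set (Fin n → ZMod 2)) :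
    Nonempty
      ((MvPolynomial (Fin n ⊕ Fin n) (ZMod 2) ⧸
          (polarNeuralIdeal C +
            Ideal.span (Set.range fun i : Fin n =>
              (X (Sum.inl i) + X (Sum.inr i) - 1 :
                MvPolynomial (Fin n ⊕ Fin n) (ZMod 2))))) ≃+*
        (MvPolynomial (Fin n) (ZMod 2) ⧸ neuralIdeal C)) := by
  classical
  set J := neuralIdeal C with hJ
  set K := polarNeuralIdeal C + Dideal n with hK
  set F : MvPolynomial (Fin n ⊕ Fin n) (ZMod 2) →+*
      MvPolynomial (Fin n) (ZMod 2) ⧸ J :=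
    (Ideal.Quotient.mk J).comp (depol (n := n) : _ →ₐ[ZMod 2] _).toRingHom with hF
  have hFsurj : Function.Surjective F := by
    intro r
    obtain ⟨r, rfl⟩ := Ideal.Quotient.mk_surjective r
    exact ⟨sec r, by simp [hF, depol_sec]⟩
  have hker : K = RingHom.ker F := by
    apply le_antisymm
    · rw [hK]
      apply sup_le
      · rw [polarNeuralIdeal, Ideal.span_le]
        rintro m ⟨σ, τ, hdisj, hmin, rfl⟩
        simp only [SetLike.mem_coe, RingHom.mem_ker, hF, RingHom.comp_apply]
        rw [AlgHom.toRingHom_eq_coe, RingHom.coe_coe, depol_polz,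
          Ideal.Quotient.eq_zero_iff_mem]
        exact hmin.2.1
      · rw [Dideal, Ideal.span_le]
        rintro m ⟨i, rfl⟩
        simp only [SetLike.mem_coe, RingHom.mem_ker, hF, RingHom.comp_apply]
        have : depol (X (Sum.inl i) + X (Sum.inr i) - 1 :
            MvPolynomial (Fin n ⊕ Fin n) (ZMod 2)) = 0 := by
          simp [depol]
        rw [AlgHom.toRingHom_eq_coe, RingHom.coe_coe, this, map_zero]
    · intro s hs
      have hφs : depol s ∈ J := by
        rw [RingHom.mem_ker, hF, RingHom.comp_apply] at hs
        rwa [← Ideal.Quotient.eq_zero_iff_mem]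
      have hsecJ : ∀ r ∈ J, sec r ∈ K := by
        intro r hr
        refine Submodule.span_induction ?_ ?_ ?_ ?_ hr
        · rintro f ⟨c, hc, rfl⟩
          exact sec_indic_mem C hc
        · simp
        · intro x y _ _ hx hy
          rw [map_add]; exact K.add_mem hx hy
        · intro a x _ hx
          rw [smul_eq_mul, map_mul]
          exact Ideal.mul_mem_left _ _ hx
      have h1 : s - sec (depol s) ∈ K := Ideal.mem_sup_right (sub_sec_depol_mem s)
      have h2 : sec (depol s) ∈ K := hsecJ _ hφs
      have : s = (s - sec (depol s)) + sec (depol s) := by ring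
      rw [this]
      exact K.add_mem h1 h2
  exact ⟨(Ideal.quotEquivOfEq (hker.symm ▸ rfl : polarNeuralIdeal C + Dideal n = RingHom.ker F)).trans
    (RingHom.quotientKerEquivOfSurjective hFsurj)⟩
end

section
/- For a neural code C ⊆ {0,1}^n, the vanishing ideal I_C = {f ∈ F_2[x_1,...,x_n] : f(c) = 0 for all c ∈ C} decomposes as I_C = B + J_C, where B = ⟨x_1²−x_1,...,x_n²−x_n⟩ and J_C = ⟨∏_{c_i=1} x_i · ∏_{c_j=0}(1−x_j) : c ∈ {0,1}^n \ C⟩. -/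
open MvPolynomial

noncomputable def boolIdeal (n : ℕ) : Ideal (MvPolynomial (Fin n) (ZMod 2)) :=
  Ideal.span (Set.range fun i : Fin n => (X i ^ 2 - X i : MvPolynomial (Fin n) (ZMod 2)))

lemma sum_indic {n : ℕ} : ∑ c : Fin n → ZMod 2, indic c = 1 := by
  classical
  unfold indic
  have hps := Finset.prod_univ_sum (t := fun _ : Fin n => (Finset.univ : Finset (ZMod 2)))
    (f := fun i b => if b = 1 then (X i : MvPolynomial (Fin n) (ZMod 2)) else 1 - X i)
  rw [← Fintype.piFinset_univ, ← hps]
  have : ∀ i : Fin n, (∑ b : ZMod 2, (if b = 1 then (X i : MvPolynomial (Fin n) (ZMod 2)) else 1 - X i)) = 1 := by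
    intro i
    have h : (Finset.univ : Finset (ZMod 2)) = {0, 1} := by decide
    rw [h, Finset.sum_insert (by decide), Finset.sum_singleton]
    norm_num
  simp [this]

lemma zmod2_cases (x : ZMod 2) : x = 0 ∨ x = 1 := by
  revert x; decide

lemma indic_mul_X_mem {n : ℕ} (c : Fin n → ZMod 2) (i : Fin n) :
    indic c * X i - C (c i) * indic c ∈ boolIdeal n := by
  classical
  have hgen : (X i ^ 2 - X i : MvPolynomial (Fin n) (ZMod 2)) ∈ boolIdeal n :=
    Ideal.subset_span ⟨i, rfl⟩
  have hsplit : indic c = (if c i = 1 then (X i : MvPolynomial (Fin n) (ZMod 2)) else 1 - X i) *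
      ∏ j ∈ Finset.univ.erase i, (if c j = 1 then X j else 1 - X j) := by
    rw [indic, ← Finset.mul_prod_erase _ _ (Finset.mem_univ i)]
  set P := ∏ j ∈ Finset.univ.erase i, (if c j = 1 then (X j : MvPolynomial (Fin n) (ZMod 2)) else 1 - X j) with hP
  rcases zmod2_cases (c i) with h0 | h1
  · rw [h0] at hsplit ⊢
    rw [if_neg (by decide)] at hsplit
    have : indic c * X i - C 0 * indic c = -(P * (X i ^ 2 - X i)) := by
      rw [hsplit]; ring_nf; simp [map_zero]
    rw [this]
    exact neg_mem (Ideal.mul_mem_left _ _ hgen)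
  · rw [h1] at hsplit ⊢
    rw [if_pos rfl] at hsplit
    have : indic c * X i - C 1 * indic c = P * (X i ^ 2 - X i) := by
      rw [hsplit]; simp [map_one]; ring
    rw [this]
    exact Ideal.mul_mem_left _ _ hgen

lemma key_decomp {n : ℕ} (f : MvPolynomial (Fin n) (ZMod 2)) :
    f - ∑ c : Fin n → ZMod 2, C (eval c f) * indic c ∈ boolIdeal n := by
  classical
  induction f using MvPolynomial.induction_on with
  | C a =>
      have : (C a : MvPolynomial (Fin n) (ZMod 2)) - ∑ c : Fin n → ZMod 2, C (eval c (C a)) * indic c = 0 := by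
        simp only [eval_C]
        rw [← Finset.mul_sum, sum_indic, mul_one, sub_self]
      rw [this]; exact zero_mem _
  | add p q hp hq =>
      have h : (p + q) - ∑ c : Fin n → ZMod 2, C (eval c (p + q)) * indic c =
          (p - ∑ c : Fin n → ZMod 2, C (eval c p) * indic c) +
          (q - ∑ c : Fin n → ZMod 2, C (eval c q) * indic c) := by
        simp only [map_add, add_mul, Finset.sum_add_distrib]
        ring
      rw [h]; exact add_mem hp hq
  | mul_X p i hp =>
      have step1 : (p * X i) - (∑ c : Fin n → ZMod 2, C (eval c p) * indic c) * X i ∈ boolIdeal n := by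
        have := Ideal.mul_mem_right (X i) _ hp
        rwa [sub_mul] at this
      have step2 : (∑ c : Fin n → ZMod 2, C (eval c p) * indic c) * X i -
          ∑ c : Fin n → ZMod 2, C (eval c (p * X i)) * indic c ∈ boolIdeal n := by
        rw [Finset.sum_mul, ← Finset.sum_sub_distrib]
        apply sum_mem
        intro c _
        have h1 : C (eval c p) * indic c * X i - C (eval c (p * X i)) * indic c =
            C (eval c p) * (indic c * X i - C (c i) * indic c) := by
          simp only [map_mul, eval_X]
          ring
        rw [h1]
        exact Ideal.mul_mem_left _ _ (indic_mul_X_mem c i)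
      have := add_mem step1 step2
      rwa [sub_add_sub_cancel] at this
  
lemma eval_bool_gen {n : ℕ} (c : Fin n → ZMod 2) (i : Fin n) :
    eval c ((X i ^ 2 - X i : MvPolynomial (Fin n) (ZMod 2))) = 0 := by
  simp only [map_sub, map_pow, eval_X]
  have : ∀ x : ZMod 2, x ^ 2 - x = 0 := by decide
  exact this _

lemma eval_indic_ne {n : ℕ} {c d : Fin n → ZMod 2} (h : c ≠ d) :
    eval d (indic c) = 0 := by
  classical
  obtain ⟨i, hi⟩ : ∃ i, c i ≠ d i := by
    by_contra hcon; push_neg at hcon; exact h (funext hcon)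
  rw [indic, map_prod]
  apply Finset.prod_eq_zero (Finset.mem_univ i)
  rcases zmod2_cases (c i) with h0 | h1
  · rw [h0] at hi ⊢
    rw [if_neg (by decide)]
    have : d i = 1 := by
      rcases zmod2_cases (d i) with hd | hd
      · exact absurd hd.symm hi
      · exact hd
    simp [this]
  · rw [h1] at hi ⊢
    rw [if_pos rfl]
    have : d i = 0 := by
      rcases zmod2_cases (d i) with hd | hd
      · exact hd
      · exact absurd hd.symm hi
    simp [this]

theorem vanishing_ideal_eq_boolean_add_neural {n : ℕ} (C : Set (Fin n → ZMod 2))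
    (f : MvPolynomial (Fin n) (ZMod 2)) :
    (∀ c ∈ C, eval c f = 0) ↔
      f ∈ Ideal.span (Set.range fun i : Fin n =>
            (X i ^ 2 - X i : MvPolynomial (Fin n) (ZMod 2))) +
          Ideal.span {g | ∃ c ∉ C, g = indic c} := by
  classical
  constructor
  · intro hf
    rw [Submodule.add_eq_sup]
    have hdecomp : f = (f - ∑ c : Fin n → ZMod 2, MvPolynomial.C (eval c f) * indic c) +
        ∑ c : Fin n → ZMod 2, MvPolynomial.C (eval c f) * indic c := by ring
    rw [hdecomp]
    apply add_mem
    · exact Submodule.mem_sup_left (key_decomp f)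
    · apply Submodule.mem_sup_right
      apply sum_mem
      intro c _
      by_cases hc : c ∈ C
      · rw [hf c hc, map_zero, zero_mul]; exact zero_mem _
      · exact Ideal.mul_mem_left _ _ (Ideal.subset_span ⟨c, hc, rfl⟩)
  · intro hf c hc
    rw [Submodule.add_eq_sup, Submodule.mem_sup] at hf
    obtain ⟨b, hb, j, hj, rfl⟩ := hf
    have hker : ∀ g ∈ Ideal.span (Set.range fun i : Fin n =>
        (X i ^ 2 - X i : MvPolynomial (Fin n) (ZMod 2))) + Ideal.span {g | ∃ c' ∉ C, g = indic c'},
        eval c g = 0 := by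
      intro g hg
      have hle : Ideal.span (Set.range fun i : Fin n =>
          (X i ^ 2 - X i : MvPolynomial (Fin n) (ZMod 2))) + Ideal.span {g | ∃ c' ∉ C, g = indic c'} ≤
          RingHom.ker (eval c : MvPolynomial (Fin n) (ZMod 2) →+* ZMod 2) := by
        rw [Submodule.add_eq_sup, sup_le_iff]
        constructor
        · rw [Ideal.span_le]
          rintro _ ⟨i, rfl⟩
          exact eval_bool_gen c i
        · rw [Ideal.span_le]
          rintro _ ⟨c', hc', rfl⟩
          have : c' ≠ c := fun h => hc' (h ▸ hc)
          exact eval_indic_ne this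
      exact hle hg
    rw [map_add]
    have h1 : eval c b = 0 := hker b (by rw [Submodule.add_eq_sup]; exact Submodule.mem_sup_left hb)
    have h2 : eval c j = 0 := hker j (by rw [Submodule.add_eq_sup]; exact Submodule.mem_sup_right hj)
    rw [h1, h2, add_zero]
end

section
/- Let C ⊆ {0,1}^n be a neural code. For α ∈ {0,1,*}^n, let V_α = {c ∈ {0,1}^n : c_i = α_i whenever α_i ≠ *} and p_α = ⟨{x_i : α_i = 0}, {1−x_i : α_i = 1}⟩ ⊆ F_2[x_1,...,x_n]. Then the neural ideal satisfies J_C = ⋂_{α : V_α ⊆ C} p_α. -/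
open MvPolynomial

/-- The interval associated to `α ∈ {0,1,*}ⁿ` (`none` plays the role of `*`):
codewords agreeing with `α` at all non-`*` coordinates. -/
def intervalOf {n : ℕ} (α : Fin n → Option (ZMod 2)) : Set (Fin n → ZMod 2) :=
  {c | ∀ i a, α i = some a → c i = a}

/-- The pseudomonomial prime associated to `α ∈ {0,1,*}ⁿ`:
generated by the `x_i` with `α_i = 0` and the `1 - x_i` with `α_i = 1`. -/
noncomputable def psmPrime {n : ℕ} (α : Fin n → Option (ZMod 2)) :
    Ideal (MvPolynomial (Fin n) (ZMod 2)) :=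
  Ideal.span ({f | ∃ i, α i = some 0 ∧ f = X i} ∪
    {f | ∃ i, α i = some 1 ∧ f = 1 - X i})

open MvPolynomial

abbrev F2 := ZMod 2
abbrev Rg (n : ℕ) := MvPolynomial (Fin n) F2

lemma f2cases (a : F2) : a = 0 ∨ a = 1 := by revert a; decide

noncomputable def subst {n : ℕ} (α : Fin n → Option F2) : Rg n →ₐ[F2] Rg n :=
  aeval (fun i => match α i with | none => X i | some a => C a)

lemma subst_X {n : ℕ} (α : Fin n → Option F2) (i : Fin n) :
    subst α (X i) = match α i with | none => X i | some a => C a := by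
  simp [subst]

lemma sub_aeval_mem {n : ℕ} (v : Fin n → Rg n) (f : Rg n) :
    f - aeval v f ∈ Ideal.span {g | ∃ i, g = X i - v i} := by
  induction f using MvPolynomial.induction_on with
  | C a => simp
  | add p q hp hq =>
      rw [map_add]
      have : p + q - (aeval v p + aeval v q) = (p - aeval v p) + (q - aeval v q) := by ring
      rw [this]; exact add_mem hp hq
  | mul_X p i hp =>
      rw [map_mul, aeval_X]
      have : p * X i - aeval v p * v i =
          (p - aeval v p) * X i + aeval v p * (X i - v i) := by ring
      rw [this]
      exact add_mem (Ideal.mul_mem_right _ _ hp)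
        (Ideal.mul_mem_left _ _ (Ideal.subset_span ⟨i, rfl⟩))

lemma mem_psmPrime_iff {n : ℕ} (α : Fin n → Option F2) (f : Rg n) :
    f ∈ psmPrime α ↔ subst α f = 0 := by
  constructor
  · intro hf
    have : psmPrime α ≤ RingHom.ker (subst α : Rg n →+* Rg n) := by
      rw [psmPrime, Ideal.span_le]
      rintro g (⟨i, hi, rfl⟩ | ⟨i, hi, rfl⟩) <;>
        simp [RingHom.mem_ker, subst_X, hi]
    exact this hf
  · intro hf
    have h2 : f - subst α f ∈
        Ideal.span {g | ∃ i, g = X i - (match α i with | none => X i | some a => C a)} :=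
      sub_aeval_mem _ f
    rw [hf, sub_zero] at h2
    refine Ideal.span_le.mpr ?_ h2
    rintro g ⟨i, rfl⟩
    rcases h : α i with _ | a
    · show (X i - X i : Rg n) ∈ _
      rw [sub_self]; exact zero_mem _
    · show (X i - C a : Rg n) ∈ _
      rcases f2cases a with rfl | rfl
      · rw [map_zero, sub_zero]
        exact Ideal.subset_span (Or.inl ⟨i, h, rfl⟩)
      · have hneg : (X i - C 1 : Rg n) = -(1 - X i) := by rw [map_one]; ring
        rw [hneg]
        exact neg_mem (Ideal.subset_span (Or.inr ⟨i, h, rfl⟩))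

lemma neuralIdeal_le_psmPrime {n : ℕ} (C : Set (Fin n → F2)) (α : Fin n → Option F2)
    (h : intervalOf α ⊆ C) : neuralIdeal C ≤ psmPrime α := by
  rw [neuralIdeal, Ideal.span_le]
  rintro g ⟨c, hc, rfl⟩
  have hcV : c ∉ intervalOf α := fun hm => hc (h hm)
  simp only [intervalOf, Set.mem_setOf_eq] at hcV
  push_neg at hcV
  obtain ⟨i, a, hia, hne⟩ := hcV
  have hfac : (if c i = 1 then X i else 1 - X i : Rg n) ∈ psmPrime α := by
    rcases f2cases a with rfl | rfl
    · have hc1 : c i = 1 := by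
        rcases f2cases (c i) with h' | h'
        · exact absurd h' hne
        · exact h'
      rw [if_pos hc1]
      exact Ideal.subset_span (Or.inl ⟨i, hia, rfl⟩)
    · rw [if_neg hne]
      exact Ideal.subset_span (Or.inr ⟨i, hia, rfl⟩)
  show indic c ∈ psmPrime α
  rw [indic, ← Finset.mul_prod_erase Finset.univ _ (Finset.mem_univ i)]
  exact Ideal.mul_mem_right _ _ hfac

lemma indic_cons {n : ℕ} (b : F2) (c' : Fin n → F2) :
    indic (Fin.cons b c') = (if b = 1 then X 0 else 1 - X 0) * rename Fin.succ (indic c') := by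
  rw [indic, Fin.prod_univ_succ, Fin.cons_zero, indic, map_prod]
  congr 1
  apply Finset.prod_congr rfl
  intro i _
  rw [Fin.cons_succ]
  split_ifs <;> simp

noncomputable def evalAt {n : ℕ} (b : F2) : Rg (n+1) →ₐ[F2] Rg n :=
  aeval (Fin.cases (C b) X)

lemma mul_lift_mem {n : ℕ} (C : Set (Fin (n+1) → F2)) (D : Set (Fin n → F2)) (m : Rg (n+1))
    (hm : ∀ c' ∉ D, m * rename Fin.succ (indic c') ∈ neuralIdeal C) :
    ∀ h ∈ neuralIdeal D, m * rename Fin.succ h ∈ neuralIdeal C := by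
  intro h hh
  refine Submodule.span_induction ?_ ?_ ?_ ?_ hh
  · rintro g ⟨c', hc', rfl⟩
    exact hm c' hc'
  · simp
  · intro x y _ _ hx hy
    rw [map_add, mul_add]
    exact add_mem hx hy
  · intro r x _ hx
    rw [smul_eq_mul, map_mul]
    have : m * (rename Fin.succ r * rename Fin.succ x) = rename Fin.succ r * (m * rename Fin.succ x) := by ring
    rw [this]
    exact Ideal.mul_mem_left _ _ hx

lemma E_lift {n : ℕ} (h : Rg n) :
    finSuccEquiv F2 n (rename Fin.succ h) = Polynomial.C h := by
  have key : ((finSuccEquiv F2 n : Rg (n+1) →+* Polynomial (Rg n)).comp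
      ((rename Fin.succ : Rg n →ₐ[F2] Rg (n+1)) : Rg n →+* Rg (n+1))) =
      (Polynomial.C.comp (RingHom.id (Rg n))) := by
    apply ringHom_ext
    · intro r
      simp [finSuccEquiv_apply]
    · intro i
      simp [finSuccEquiv_X_succ]
  exact DFunLike.congr_fun key h

lemma evalAt_eq {n : ℕ} (b : F2) (f : Rg (n+1)) :
    evalAt b f = Polynomial.eval (C b) (finSuccEquiv F2 n f) := by
  have key : ((evalAt b : Rg (n+1) →ₐ[F2] Rg n) : Rg (n+1) →+* Rg n) =
      (Polynomial.evalRingHom (C b : Rg n)).comp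
        (finSuccEquiv F2 n : Rg (n+1) →+* Polynomial (Rg n)) := by
    apply ringHom_ext
    · intro r
      simp [evalAt, finSuccEquiv_apply]
    · intro i
      refine Fin.cases ?_ ?_ i
      · simp [evalAt, finSuccEquiv_X_zero]
      · intro j
        simp [evalAt, finSuccEquiv_X_succ]
  exact DFunLike.congr_fun key f

lemma decomp {n : ℕ} (f : Rg (n+1)) :
    ∃ q : Rg (n+1),
      f = X 0 * rename Fin.succ (evalAt 1 f) + (1 - X 0) * rename Fin.succ (evalAt 0 f)
          + X 0 * (X 0 - 1) * q := by
  set P := finSuccEquiv F2 n f with hP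
  set G := P - Polynomial.X * Polynomial.C (evalAt 1 f)
      - (1 - Polynomial.X) * Polynomial.C (evalAt 0 f) with hG
  have e0 : Polynomial.eval (0 : Rg n) P = evalAt 0 f := by
    rw [evalAt_eq, map_zero]
  have e1 : Polynomial.eval (1 : Rg n) P = evalAt 1 f := by
    rw [evalAt_eq, map_one]
  have h0 : G.eval 0 = 0 := by
    simp [hG, e0]
  have h1 : G.eval 1 = 0 := by
    simp [hG, e1]
  obtain ⟨H, hH⟩ : Polynomial.X ∣ G := by
    rw [Polynomial.X_dvd_iff, Polynomial.coeff_zero_eq_eval_zero, h0]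
  have hH1 : H.eval 1 = 0 := by
    have := h1
    rw [hH] at this
    simpa using this
  obtain ⟨K, hK⟩ : Polynomial.X - Polynomial.C (1 : Rg n) ∣ H :=
    Polynomial.dvd_iff_isRoot.mpr hH1
  refine ⟨(finSuccEquiv F2 n).symm K, (finSuccEquiv F2 n).injective ?_⟩
  rw [map_add, map_add, map_mul, map_mul, map_mul, map_mul, map_sub, map_sub, map_one,
    finSuccEquiv_X_zero, E_lift, E_lift, AlgEquiv.apply_symm_apply]
  have hGK : G = Polynomial.X * ((Polynomial.X - Polynomial.C 1) * K) := by
    rw [← hK, ← hH]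
  rw [hG, Polynomial.C_1] at hGK
  show P = _
  linear_combination hGK

lemma subst_cons_lift {n : ℕ} (α' : Fin n → Option F2) (h : Rg n) :
    subst (Fin.cons none α') (rename Fin.succ h) = rename Fin.succ (subst α' h) := by
  have key : (subst (Fin.cons none α')).comp (rename Fin.succ) =
      (rename Fin.succ : Rg n →ₐ[F2] Rg (n+1)).comp (subst α') := by
    apply algHom_ext
    intro i
    rcases h' : α' i with _ | a <;>
      simp [subst, Fin.cons_succ, h']
  exact DFunLike.congr_fun key h

lemma E_subst_none {n : ℕ} (α' : Fin n → Option F2) (g : Rg (n+1)) :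
    finSuccEquiv F2 n (subst (Fin.cons none α') g) =
      Polynomial.map ((subst α' : Rg n →ₐ[F2] Rg n) : Rg n →+* Rg n)
        (finSuccEquiv F2 n g) := by
  have key : ((finSuccEquiv F2 n : Rg (n+1) →+* Polynomial (Rg n)).comp
      ((subst (Fin.cons none α') : Rg (n+1) →ₐ[F2] Rg (n+1)) : Rg (n+1) →+* Rg (n+1))) =
      (Polynomial.mapRingHom ((subst α' : Rg n →ₐ[F2] Rg n) : Rg n →+* Rg n)).comp
        (finSuccEquiv F2 n : Rg (n+1) →+* Polynomial (Rg n)) := by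
    apply ringHom_ext
    · intro r
      simp [subst, finSuccEquiv_apply]
    · intro i
      refine Fin.cases ?_ ?_ i
      · simp [subst, Fin.cons_zero, finSuccEquiv_X_zero]
      · intro j
        rcases h' : α' j with _ | a <;>
          simp [subst, Fin.cons_succ, h', finSuccEquiv_X_succ, finSuccEquiv_apply]
  exact DFunLike.congr_fun key g

lemma q_as_sum {n : ℕ} (q : Rg (n+1)) :
    q = ∑ k ∈ ((finSuccEquiv F2 n) q).support,
        X 0 ^ k * rename Fin.succ (((finSuccEquiv F2 n) q).coeff k) := by
  apply (finSuccEquiv F2 n).injective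
  have key : ∀ k, (finSuccEquiv F2 n) (X 0 ^ k * rename Fin.succ
      (((finSuccEquiv F2 n) q).coeff k)) =
      Polynomial.monomial k (((finSuccEquiv F2 n) q).coeff k) := by
    intro k
    rw [map_mul, map_pow, finSuccEquiv_X_zero, E_lift, ← Polynomial.C_mul_X_pow_eq_monomial]
    ring
  rw [map_sum]
  simp_rw [key]
  exact Polynomial.as_sum_support _

lemma mem_psm_cons_some {n : ℕ} (α' : Fin n → Option F2) (b : F2) (f : Rg (n+1))
    (hf : f ∈ psmPrime (Fin.cons (some b) α')) : evalAt b f ∈ psmPrime α' := by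
  have key : psmPrime (Fin.cons (some b) α') ≤
      Ideal.comap ((evalAt b : Rg (n+1) →ₐ[F2] Rg n) : Rg (n+1) →+* Rg n) (psmPrime α') := by
    rw [psmPrime, Ideal.span_le]
    rintro g (⟨i, hi, rfl⟩ | ⟨i, hi, rfl⟩) <;>
      rcases i.eq_zero_or_eq_succ with rfl | ⟨j, rfl⟩
    · rw [Fin.cons_zero, Option.some_inj] at hi
      show evalAt b (X 0) ∈ psmPrime α'
      have hv : evalAt (n:=n) b (X 0) = C b := by simp [evalAt]
      rw [hv, hi, map_zero]
      exact zero_mem _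
    · rw [Fin.cons_succ] at hi
      show evalAt b (X j.succ) ∈ psmPrime α'
      have hv : evalAt (n:=n) b (X j.succ) = X j := by simp [evalAt]
      rw [hv]
      exact Ideal.subset_span (Or.inl ⟨j, hi, rfl⟩)
    · rw [Fin.cons_zero, Option.some_inj] at hi
      show evalAt b (1 - X 0) ∈ psmPrime α'
      have hv : evalAt (n:=n) b (1 - X 0) = 1 - C b := by simp [evalAt]
      rw [hv, hi, map_one, sub_self]
      exact zero_mem _
    · rw [Fin.cons_succ] at hi
      show evalAt b (1 - X j.succ) ∈ psmPrime α'
      have hv : evalAt (n:=n) b (1 - X j.succ) = 1 - X j := by simp [evalAt]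
      rw [hv]
      exact Ideal.subset_span (Or.inr ⟨j, hi, rfl⟩)
  exact key hf

def codeAt {n : ℕ} (b : F2) (C : Set (Fin (n+1) → F2)) : Set (Fin n → F2) :=
  {c' | Fin.cons b c' ∈ C}

lemma hard : ∀ (n : ℕ) (C : Set (Fin n → F2)),
    (⨅ (α : Fin n → Option F2) (_ : intervalOf α ⊆ C), psmPrime α) ≤ neuralIdeal C := by
  intro n
  induction n with
  | zero =>
    intro C f hf
    by_cases hC : Set.univ ⊆ C
    · have h1 : intervalOf (fun _ : Fin 0 => (none : Option F2)) ⊆ C :=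
        fun c _ => hC (Set.mem_univ c)
      have hfα := (Submodule.mem_iInf _).mp
        ((Submodule.mem_iInf _).mp hf (fun _ : Fin 0 => (none : Option F2))) h1
      have hbot : psmPrime (fun _ : Fin 0 => (none : Option F2)) = ⊥ := by
        rw [psmPrime]
        have : ({f | ∃ i : Fin 0, (fun _ : Fin 0 => (none : Option F2)) i = some 0 ∧ f = X i} ∪
            {f | ∃ i : Fin 0, (fun _ : Fin 0 => (none : Option F2)) i = some 1 ∧ f = 1 - X i}
            : Set (Rg 0)) = ∅ := by
          ext g
          simp only [Set.mem_union, Set.mem_setOf_eq, Set.mem_empty_iff_false, iff_false]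
          rintro (⟨i, _, _⟩ | ⟨i, _, _⟩) <;> exact i.elim0
        rw [this, Ideal.span_empty]
      rw [hbot, Submodule.mem_bot] at hfα
      rw [hfα]
      exact zero_mem _
    · obtain ⟨c, -, hc⟩ := Set.not_subset.mp hC
      have h1 : (1 : Rg 0) ∈ neuralIdeal C := by
        have hi : indic c = 1 := by
          rw [indic]
          simp
        exact hi ▸ Ideal.subset_span ⟨c, hc, rfl⟩
      exact Ideal.eq_top_iff_one _ |>.mpr h1 ▸ Submodule.mem_top
  | succ n IH =>
    intro C f hf
    have hmem : ∀ α, intervalOf α ⊆ C → f ∈ psmPrime α := fun α h =>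
      (Submodule.mem_iInf _).mp ((Submodule.mem_iInf _).mp hf α) h
    -- interval lemmas
    have htail : ∀ (α' : Fin n → Option F2) (c : Fin (n+1) → F2),
        c ∈ intervalOf (Fin.cons (none : Option F2) α') → Fin.tail c ∈ intervalOf α' := by
      intro α' c hc i a ha
      exact hc i.succ a (by rw [Fin.cons_succ]; exact ha)
    have hcons : ∀ (b : F2) (α' : Fin n → Option F2), intervalOf α' ⊆ codeAt b C →
        intervalOf (Fin.cons (some b) α') ⊆ C := by
      intro b α' hsub c hc
      have h0 : c 0 = b := hc 0 b (by rw [Fin.cons_zero])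
      have ht : Fin.tail c ∈ intervalOf α' := by
        intro i a ha
        exact hc i.succ a (by rw [Fin.cons_succ]; exact ha)
      have hmemC : Fin.cons b (Fin.tail c) ∈ C := hsub ht
      rw [← h0] at hmemC
      rwa [Fin.cons_self_tail] at hmemC
    have hf1 : ∀ α', intervalOf α' ⊆ codeAt 1 C → evalAt 1 f ∈ psmPrime α' := fun α' h =>
      mem_psm_cons_some _ _ _ (hmem _ (hcons 1 α' h))
    have hf0 : ∀ α', intervalOf α' ⊆ codeAt 0 C → evalAt 0 f ∈ psmPrime α' := fun α' h =>
      mem_psm_cons_some _ _ _ (hmem _ (hcons 0 α' h))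
    have hf1J : evalAt 1 f ∈ neuralIdeal (codeAt 1 C) :=
      IH _ ((Submodule.mem_iInf _).mpr fun α' =>
        (Submodule.mem_iInf _).mpr fun h => hf1 α' h)
    have hf0J : evalAt 0 f ∈ neuralIdeal (codeAt 0 C) :=
      IH _ ((Submodule.mem_iInf _).mpr fun α' =>
        (Submodule.mem_iInf _).mpr fun h => hf0 α' h)
    obtain ⟨q, hdec⟩ := decomp f
    -- the key vanishing of q under substitutions
    have hq0 : ∀ α', intervalOf α' ⊆ (codeAt 0 C ∩ codeAt 1 C) →
        subst (Fin.cons none α') q = 0 := by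
      intro α' hsub
      have hαC : intervalOf (Fin.cons (none : Option F2) α') ⊆ C := by
        intro c hc
        have h2 := hsub (htail α' c hc)
        rcases f2cases (c 0) with h0 | h0
        · have hx : Fin.cons (0 : F2) (Fin.tail c) ∈ C := h2.1
          rw [← h0] at hx
          rwa [Fin.cons_self_tail] at hx
        · have hx : Fin.cons (1 : F2) (Fin.tail c) ∈ C := h2.2
          rw [← h0] at hx
          rwa [Fin.cons_self_tail] at hx
      have hfα : subst (Fin.cons none α') f = 0 :=
        (mem_psmPrime_iff _ _).mp (hmem _ hαC)
      have hs1 : subst α' (evalAt 1 f) = 0 :=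
        (mem_psmPrime_iff _ _).mp (hf1 α' (fun c hc => (hsub hc).2))
      have hs0 : subst α' (evalAt 0 f) = 0 :=
        (mem_psmPrime_iff _ _).mp (hf0 α' (fun c hc => (hsub hc).1))
      have hX0 : subst (Fin.cons none α') (X 0) = X 0 := by
        simp [subst, Fin.cons_zero]
      have happ := congrArg (subst (Fin.cons none α')) hdec
      rw [hfα, map_add, map_add, map_mul, map_mul, map_mul, map_mul, map_sub, map_sub,
        map_one, hX0, subst_cons_lift, subst_cons_lift, hs1, hs0] at happ
      simp only [map_zero, mul_zero, add_zero, zero_add] at happ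
      have hne : (X 0 * (X 0 - 1) : Rg (n+1)) ≠ 0 := by
        apply mul_ne_zero (MvPolynomial.X_ne_zero 0)
        intro hz
        have := congrArg constantCoeff hz
        simp at this
      exact ((mul_eq_zero.mp happ.symm).resolve_left hne)
    have hwJ : ∀ k : ℕ, ((finSuccEquiv F2 n) q).coeff k ∈
        neuralIdeal (codeAt 0 C ∩ codeAt 1 C) := by
      intro k
      apply IH
      refine (Submodule.mem_iInf _).mpr fun α' => (Submodule.mem_iInf _).mpr fun hsub => ?_
      rw [mem_psmPrime_iff]
      have h := congrArg (finSuccEquiv F2 n) (hq0 α' hsub)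
      rw [E_subst_none, map_zero] at h
      have h2 := congrArg (fun P => Polynomial.coeff P k) h
      simpa [Polynomial.coeff_map] using h2
    -- assemble
    rw [hdec]
    refine add_mem (add_mem ?_ ?_) ?_
    · refine mul_lift_mem C (codeAt 1 C) (X 0) ?_ _ hf1J
      intro c' hc'
      have he : X 0 * rename Fin.succ (indic c') = indic (Fin.cons 1 c') := by
        rw [indic_cons, if_pos rfl]
      exact he ▸ Ideal.subset_span ⟨_, hc', rfl⟩
    · refine mul_lift_mem C (codeAt 0 C) (1 - X 0) ?_ _ hf0J
      intro c' hc'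
      have he : (1 - X 0) * rename Fin.succ (indic c') = indic (Fin.cons 0 c') := by
        rw [indic_cons, if_neg (by decide)]
      exact he ▸ Ideal.subset_span ⟨_, hc', rfl⟩
    · rw [q_as_sum q, Finset.mul_sum]
      refine sum_mem fun k _ => ?_
      have he : X 0 * (X 0 - 1) * (X 0 ^ k * rename Fin.succ (((finSuccEquiv F2 n) q).coeff k)) =
          (X 0 * (X 0 - 1) * X 0 ^ k) * rename Fin.succ (((finSuccEquiv F2 n) q).coeff k) := by
        ring
      rw [he]
      refine mul_lift_mem C (codeAt 0 C ∩ codeAt 1 C) _ ?_ _ (hwJ k)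
      intro c' hc'
      have hc'' : c' ∉ codeAt 0 C ∨ c' ∉ codeAt 1 C := by
        by_contra hcon
        push_neg at hcon
        exact hc' ⟨hcon.1, hcon.2⟩
      rcases hc'' with h | h
      · have he2 : (X 0 * (X 0 - 1) * X 0 ^ k) * rename Fin.succ (indic c') =
            (-(X 0 * X 0 ^ k)) * ((1 - X 0) * rename Fin.succ (indic c')) := by
          ring
        have hind : (1 - X 0) * rename Fin.succ (indic c') = indic (Fin.cons 0 c') := by
          rw [indic_cons, if_neg (by decide)]
        rw [he2, hind]
        exact Ideal.mul_mem_left _ _ (Ideal.subset_span ⟨_, h, rfl⟩)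
      · have he2 : (X 0 * (X 0 - 1) * X 0 ^ k) * rename Fin.succ (indic c') =
            ((X 0 - 1) * X 0 ^ k) * (X 0 * rename Fin.succ (indic c')) := by
          ring
        have hind : (X 0) * rename Fin.succ (indic c') = indic (Fin.cons 1 c') := by
          rw [indic_cons, if_pos rfl]
        rw [he2, hind]
        exact Ideal.mul_mem_left _ _ (Ideal.subset_span ⟨_, h, rfl⟩)

theorem neuralIdeal_eq_iInf_psmPrime {n : ℕ} (C : Set (Fin n → ZMod 2)) :
    neuralIdeal C =
      ⨅ (α : Fin n → Option (ZMod 2)) (_ : intervalOf α ⊆ C), psmPrime α := by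
  apply le_antisymm
  · exact le_iInf fun α => le_iInf fun h => neuralIdeal_le_psmPrime C α h
  · exact hard n C
end
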